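/- The univariate function η̃_{2M}(x) = π^{-1/2} L_{M-1}^{(1/2)}(x²) e^{-x²} satisfies the moment conditions of order 2M: ∫_ℝ η̃_{2M}(x) dx = 1 and ∫_ℝ η̃_{2M}(x) x^k dx = 0 for all integers k with 1 ≤ k ≤ 2M − 1. -/

import Mathlib

open MeasureTheory

noncomputable def genLaguerre (k : ℕ) (γ : ℝ) (y : ℝ) : ℝ :=
  (Real.exp y * y ^ (-γ) / (Nat.factorial k)) *
    iteratedDeriv k (fun z => Real.exp (-z) * z ^ ((k : ℝ) + γ)) y

noncomputable def etaTilde (M : ℕ) (x : ℝ) : ℝ :=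
  (Real.sqrt Real.pi)⁻¹ * genLaguerre (M - 1) (1/2) (x ^ 2) * Real.exp (-x ^ 2)

open Set Filter Polynomial

noncomputable def lagQ (n : ℕ) : ℕ → Polynomial ℝ
  | 0 => 1
  | m + 1 => Polynomial.C ((n : ℝ) - m + 1/2) * lagQ n m
      + Polynomial.X * (Polynomial.derivative (lagQ n m) - lagQ n m)

noncomputable def gFun (n m : ℕ) (t : ℝ) : ℝ :=
  Real.exp (-t) * t ^ ((n : ℝ) - m + 1/2) * (lagQ n m).eval t

lemma beta_ne (n m : ℕ) : (n : ℝ) - m + 1/2 ≠ 0 := by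
  intro h
  have h2 : (2 * (n : ℝ) - 2 * m) = -1 := by linarith
  have h3 : ((2 * (n : ℤ) - 2 * m : ℤ) : ℝ) = ((-1 : ℤ) : ℝ) := by push_cast; linarith
  have := Int.cast_injective h3
  omega

lemma hasDerivAt_gFun (n m : ℕ) {t : ℝ} (ht : 0 < t) :
    HasDerivAt (gFun n m) (gFun n (m + 1) t) t := by
  have h1 : HasDerivAt (fun t : ℝ => Real.exp (-t)) (-Real.exp (-t)) t := by
    simpa using (hasDerivAt_neg t).exp
  have h2 : HasDerivAt (fun t : ℝ => t ^ ((n : ℝ) - m + 1/2))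
      (((n : ℝ) - m + 1/2) * t ^ ((n : ℝ) - m + 1/2 - 1)) t :=
    Real.hasDerivAt_rpow_const (Or.inl ht.ne')
  have h3 := (lagQ n m).hasDerivAt t
  have h := (h1.mul h2).mul h3
  convert h using 1
  · rfl
  · rfl
  · rfl
  have hsplit : t ^ ((n : ℝ) - m + 1/2) = t ^ ((n : ℝ) - m + 1/2 - 1) * t := by
    rw [← Real.rpow_add_one ht.ne']
    ring_nf
  have hexp : (n : ℝ) - (m + 1 : ℕ) + 1/2 = (n : ℝ) - m + 1/2 - 1 := by push_cast; ring
  simp only [gFun, lagQ, hexp, eval_add, eval_mul, eval_C, eval_X, eval_sub, Pi.mul_apply]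
  rw [hsplit]
  ring

lemma iter_eq (n : ℕ) (m : ℕ) : ∀ t : ℝ, 0 < t →
    iteratedDeriv m (fun z => Real.exp (-z) * z ^ ((n : ℝ) + 1/2)) t = gFun n m t := by
  induction m with
  | zero =>
    intro t ht
    simp [gFun, lagQ]
  | succ m ih =>
    intro t ht
    rw [iteratedDeriv_succ]
    have hev : iteratedDeriv m (fun z => Real.exp (-z) * z ^ ((n : ℝ) + 1/2)) =ᶠ[nhds t] gFun n m := by
      filter_upwards [isOpen_Ioi.mem_nhds ht] with y hy
      exact ih y hy
    rw [hev.deriv_eq]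
    exact (hasDerivAt_gFun n m ht).deriv

lemma intOn_poly (c : ℝ) (hc : -1 < c) (p : Polynomial ℝ) :
    IntegrableOn (fun t => Real.exp (-t) * t ^ c * p.eval t) (Ioi (0:ℝ)) := by
  have hint : IntegrableOn (fun t => ∑ i ∈ Finset.range (p.natDegree + 1),
      p.coeff i * (Real.exp (-t) * t ^ (c + i))) (Ioi (0:ℝ)) := by
    apply integrable_finset_sum
    intro i _
    have hi : (0:ℝ) ≤ i := Nat.cast_nonneg i
    have h0 : (0:ℝ) < c + i + 1 := by linarith
    have := Real.GammaIntegral_convergent (s := c + i + 1) h0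
    simp only [add_sub_cancel_right] at this
    exact this.const_mul _
  apply hint.congr_fun _ measurableSet_Ioi
  intro t ht
  dsimp only
  rw [eval_eq_sum_range, Finset.mul_sum]
  apply Finset.sum_congr rfl
  intro i _
  rw [Real.rpow_add ht, Real.rpow_natCast]
  ring

lemma tendsto_top_poly (c : ℝ) (p : Polynomial ℝ) :
    Tendsto (fun t : ℝ => Real.exp (-t) * t ^ c * p.eval t) atTop (nhds 0) := by
  have hsum : Tendsto (fun t : ℝ => ∑ i ∈ Finset.range (p.natDegree + 1),
      p.coeff i * (t ^ (c + i) * Real.exp (-1 * t))) atTop (nhds 0) := by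
    have : Tendsto (fun t : ℝ => ∑ i ∈ Finset.range (p.natDegree + 1),
        p.coeff i * (t ^ (c + i) * Real.exp (-1 * t))) atTop
        (nhds (∑ i ∈ Finset.range (p.natDegree + 1), p.coeff i * 0)) := by
      apply tendsto_finset_sum
      intro i _
      exact (tendsto_rpow_mul_exp_neg_mul_atTop_nhds_zero (c + i) 1 one_pos).const_mul _
    simpa using this
  apply hsum.congr'
  filter_upwards [eventually_gt_atTop (0:ℝ)] with t ht
  rw [eval_eq_sum_range, Finset.mul_sum]
  apply Finset.sum_congr rfl
  intro i _
  rw [Real.rpow_add ht, Real.rpow_natCast]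
  ring_nf

lemma tendsto_zero_poly (c : ℝ) (hc : 0 < c) (p : Polynomial ℝ) :
    Tendsto (fun t : ℝ => Real.exp (-t) * t ^ c * p.eval t) (nhdsWithin 0 (Ioi 0)) (nhds 0) := by
  have h1 : Tendsto (fun t : ℝ => t ^ c) (nhds 0) (nhds 0) := by
    have := (Real.continuousAt_rpow_const 0 c (Or.inr hc.le)).tendsto
    rwa [Real.zero_rpow hc.ne'] at this
  have h2 : Tendsto (fun t : ℝ => Real.exp (-t) * t ^ c * p.eval t) (nhds 0)
      (nhds (Real.exp (-0) * 0 * p.eval 0)) := by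
    exact ((((Real.continuous_exp.comp continuous_neg).tendsto 0)).mul h1).mul
      ((p.continuous_aeval.tendsto 0))
  simp only [neg_zero, Real.exp_zero, one_mul, zero_mul, mul_zero] at h2
  exact h2.mono_left nhdsWithin_le_nhds

lemma intOn_gFun (n m : ℕ) (a : ℝ) (h : -1 < a + ((n : ℝ) - m + 1/2)) :
    IntegrableOn (fun t => t ^ a * gFun n m t) (Ioi (0:ℝ)) := by
  apply (intOn_poly (a + ((n : ℝ) - m + 1/2)) h (lagQ n m)).congr_fun _ measurableSet_Ioi
  intro t ht
  dsimp only [gFun]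
  rw [Real.rpow_add ht]
  ring

lemma gFun_zero_val (n m : ℕ) : gFun n m 0 = 0 := by
  simp only [gFun, Real.zero_rpow (beta_ne n m), mul_zero, zero_mul]

lemma parts (n m : ℕ) (a : ℝ) (h0 : 0 < a + ((n : ℝ) - m + 1/2)) :
    ∫ t in Ioi (0:ℝ), (a * t ^ (a - 1) * gFun n m t + t ^ a * gFun n (m + 1) t) = 0 := by
  have hb1 : -1 < a - 1 + ((n : ℝ) - m + 1/2) := by linarith
  have hexp : (n : ℝ) - (m + 1 : ℕ) + 1/2 = (n : ℝ) - m + 1/2 - 1 := by push_cast; ring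
  have key := integral_Ioi_of_hasDerivAt_of_tendsto (a := (0:ℝ))
    (f := fun t => t ^ a * gFun n m t)
    (f' := fun t => a * t ^ (a - 1) * gFun n m t + t ^ a * gFun n (m + 1) t)
    (m := 0) ?_ ?_ ?_ ?_
  · rw [key, gFun_zero_val]
    simp
  · -- continuity within Ici at 0
    rw [← continuousWithinAt_Ioi_iff_Ici]
    show Tendsto (fun t => t ^ a * gFun n m t) (nhdsWithin 0 (Ioi 0))
      (nhds ((0:ℝ) ^ a * gFun n m 0))
    rw [gFun_zero_val, mul_zero]
    apply (tendsto_zero_poly (a + ((n : ℝ) - m + 1/2)) h0 (lagQ n m)).congr'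
    filter_upwards [self_mem_nhdsWithin] with t (ht : t ∈ Ioi (0:ℝ))
    dsimp only [gFun]
    rw [Real.rpow_add ht]
    ring
  · intro x hx
    have h1 : HasDerivAt (fun t : ℝ => t ^ a) (a * x ^ (a - 1)) x :=
      Real.hasDerivAt_rpow_const (Or.inl (ne_of_gt hx))
    exact h1.mul (hasDerivAt_gFun n m hx)
  · apply Integrable.add
    · exact IntegrableOn.congr_fun ((intOn_gFun n m (a - 1) hb1).const_mul a)
        (fun t _ => by ring) measurableSet_Ioi
    · exact intOn_gFun n (m + 1) a (by rw [hexp]; linarith)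
  · apply (tendsto_top_poly (a + ((n : ℝ) - m + 1/2)) (lagQ n m)).congr'
    filter_upwards [eventually_gt_atTop (0:ℝ)] with t ht
    dsimp only [gFun]
    rw [Real.rpow_add ht]
    ring

lemma step (n m : ℕ) (a : ℝ) (h0 : 0 < a + ((n : ℝ) - m + 1/2)) :
    ∫ t in Ioi (0:ℝ), t ^ a * gFun n (m + 1) t
      = -a * ∫ t in Ioi (0:ℝ), t ^ (a - 1) * gFun n m t := by
  have hexp : (n : ℝ) - (m + 1 : ℕ) + 1/2 = (n : ℝ) - m + 1/2 - 1 := by push_cast; ring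
  have hu : IntegrableOn (fun t => a * (t ^ (a - 1) * gFun n m t)) (Ioi (0:ℝ)) :=
    (intOn_gFun n m (a - 1) (by linarith)).const_mul a
  have hv : IntegrableOn (fun t => t ^ a * gFun n (m + 1) t) (Ioi (0:ℝ)) :=
    intOn_gFun n (m + 1) a (by rw [hexp]; linarith)
  have hp := parts n m a h0
  have hsplit : ∫ t in Ioi (0:ℝ), (a * t ^ (a - 1) * gFun n m t + t ^ a * gFun n (m + 1) t)
      = (∫ t in Ioi (0:ℝ), a * (t ^ (a - 1) * gFun n m t))
        + ∫ t in Ioi (0:ℝ), t ^ a * gFun n (m + 1) t := by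
    rw [← integral_add hu hv]
    congr 1; funext t; ring
  rw [hsplit, integral_const_mul] at hp
  linarith

lemma momA (n : ℕ) : ∀ j m : ℕ, 1 ≤ j → j ≤ m → m ≤ n →
    ∫ t in Ioi (0:ℝ), t ^ ((j : ℝ) - 1) * gFun n m t = 0 := by
  intro j
  induction j with
  | zero => intro m h; omega
  | succ j ih =>
    intro m h1 hjm hmn
    obtain ⟨m', rfl⟩ : ∃ m', m = m' + 1 := ⟨m - 1, by omega⟩
    have hm'n : (m' : ℝ) ≤ n := by exact_mod_cast Nat.cast_le.mpr (by omega : m' ≤ n)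
    rcases Nat.eq_zero_or_pos j with rfl | hj
    · -- j + 1 = 1, exponent 0
      have h0 : (0:ℝ) < 0 + ((n : ℝ) - m' + 1/2) := by simp; linarith
      have := step n m' 0 h0
      simp only [neg_zero, zero_mul] at this
      have he : ((0 + 1 : ℕ) : ℝ) - 1 = (0:ℝ) := by norm_num
      rw [he]
      exact this
    · have h0 : (0:ℝ) < (j:ℝ) + ((n : ℝ) - m' + 1/2) := by
        have : (0:ℝ) ≤ j := Nat.cast_nonneg j
        linarith
      have hs := step n m' (j:ℝ) h0
      have he : ((j + 1 : ℕ) : ℝ) - 1 = (j:ℝ) := by push_cast; ring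
      rw [he, hs, ih m' hj (by omega) (by omega)]
      ring

lemma momB (n : ℕ) : ∀ m : ℕ, m ≤ n →
    ∫ t in Ioi (0:ℝ), t ^ (-((n : ℝ) - m) - 1) * gFun n m t
      = (n.descFactorial m : ℝ) * Real.sqrt Real.pi := by
  intro m
  induction m with
  | zero =>
    intro _
    have : ∫ t in Ioi (0:ℝ), t ^ (-((n : ℝ) - ((0:ℕ):ℝ)) - 1) * gFun n 0 t
        = ∫ t in Ioi (0:ℝ), Real.exp (-t) * t ^ ((1:ℝ)/2 - 1) := by
      apply setIntegral_congr_fun measurableSet_Ioi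
      intro t ht
      have h2 : t ^ (-((n : ℝ) - ((0:ℕ):ℝ)) - 1) * t ^ ((n:ℝ) - ((0:ℕ):ℝ) + 1/2)
          = t ^ ((1:ℝ)/2 - 1) := by
        rw [← Real.rpow_add ht]; congr 1; push_cast; ring
      dsimp only [gFun, lagQ]
      rw [eval_one, mul_one, mul_left_comm, h2]
    rw [this, ← Real.Gamma_eq_integral (by norm_num : (0:ℝ) < 1/2), Real.Gamma_one_half_eq]
    simp
  | succ m ih =>
    intro hmn
    have hm : m ≤ n := by omega
    have hcast : ((n - m : ℕ) : ℝ) = (n : ℝ) - m := Nat.cast_sub hm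
    have h0 : (0:ℝ) < (-((n : ℝ) - m)) + ((n : ℝ) - m + 1/2) := by ring_nf; norm_num
    have hs := step n m (-((n : ℝ) - m)) h0
    have he1 : -((n : ℝ) - (m + 1 : ℕ)) - 1 = -((n : ℝ) - m) := by push_cast; ring
    have he2 : -((n : ℝ) - m) - 1 = -((n : ℝ) - m) - 1 := rfl
    rw [he1, hs, ih hm, Nat.descFactorial_succ]
    push_cast [hcast]
    ring


lemma etaInt (M : ℕ) (j : ℕ) :
    ∫ x in Ioi (0:ℝ), etaTilde M x * x ^ (2 * j)
      = ((2:ℝ)⁻¹ * (Real.sqrt Real.pi)⁻¹ * ((Nat.factorial (M-1)):ℝ)⁻¹)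
        * ∫ t in Ioi (0:ℝ), t ^ ((j : ℝ) - 1) * gFun (M-1) (M-1) t := by
  set n := M - 1 with hn
  set c : ℝ := (2:ℝ)⁻¹ * (Real.sqrt Real.pi)⁻¹ * ((Nat.factorial n):ℝ)⁻¹ with hc
  have hsub := integral_comp_rpow_Ioi
    (fun t => c * (t ^ ((j : ℝ) - 1) * gFun n n t)) (p := 2) two_ne_zero
  have hcongr : ∫ x in Ioi (0:ℝ), etaTilde M x * x ^ (2 * j)
      = ∫ x in Ioi (0:ℝ), (|(2:ℝ)| * x ^ ((2:ℝ) - 1)) •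
          (c * ((x ^ (2:ℝ)) ^ ((j : ℝ) - 1) * gFun n n (x ^ (2:ℝ)))) := by
    apply setIntegral_congr_fun measurableSet_Ioi
    intro x hx
    have hx0 : (0:ℝ) < x := hx
    have hx2 : (0:ℝ) < x ^ 2 := by positivity
    have hr2 : x ^ ((2:ℝ)) = x ^ (2:ℕ) := by
      rw [← Real.rpow_natCast x 2]; norm_num
    have hr1 : x ^ ((2:ℝ) - 1) = x := by
      norm_num
    dsimp only [etaTilde, genLaguerre]
    rw [iter_eq n n (x ^ 2) hx2]
    rw [smul_eq_mul, hr1, hr2]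
    have hjx : ((x:ℝ) ^ (2:ℕ)) ^ ((j:ℝ) - 1) = (x ^ (2:ℕ)) ^ (j:ℕ) * (x ^ (2:ℕ))⁻¹ := by
      rw [Real.rpow_sub hx2, Real.rpow_one, Real.rpow_natCast, div_eq_mul_inv]
    have hhalf : ((x:ℝ) ^ (2:ℕ)) ^ (-(1/2:ℝ)) = x⁻¹ := by
      rw [Real.rpow_neg hx2.le]
      congr 1
      rw [← Real.sqrt_eq_rpow, Real.sqrt_sq hx0.le]
    rw [hjx, hhalf, Real.exp_neg, pow_mul, hc]
    have hfac : ((Nat.factorial n : ℝ)) ≠ 0 := by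
      exact_mod_cast Nat.factorial_ne_zero n
    have hpi : Real.sqrt Real.pi ≠ 0 := by
      positivity
    field_simp
    ring
  rw [hcongr]
  rw [← integral_const_mul]
  exact hsub

lemma evenFull (M j : ℕ) :
    ∫ x : ℝ, etaTilde M x * x ^ (2*j)
      = 2 * ∫ x in Ioi (0:ℝ), etaTilde M x * x ^ (2*j) := by
  rw [← integral_comp_abs (f := fun y => etaTilde M y * y ^ (2*j))]
  congr 1
  funext x
  simp only [etaTilde, pow_mul, sq_abs]

lemma oddZero (M k : ℕ) (hk : Odd k) : ∫ x : ℝ, etaTilde M x * x ^ k = 0 := by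
  have h := integral_neg_eq_self (fun x : ℝ => etaTilde M x * x ^ k) volume
  have h2 : ∀ x : ℝ, etaTilde M (-x) * (-x) ^ k = -(etaTilde M x * x ^ k) := by
    intro x
    rw [hk.neg_pow]
    have hev : etaTilde M (-x) = etaTilde M x := by simp [etaTilde, neg_sq]
    rw [hev]; ring
  simp only [h2] at h
  rw [integral_neg] at h
  linarith

theorem stmt9 (M : ℕ) (hM : 1 ≤ M) :
    (∫ x : ℝ, etaTilde M x) = 1 ∧
      ∀ k : ℕ, 1 ≤ k → k ≤ 2 * M - 1 → (∫ x : ℝ, etaTilde M x * x ^ k) = 0 := by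
  have hfac : ((Nat.factorial (M-1) : ℝ)) ≠ 0 := by
    exact_mod_cast Nat.factorial_ne_zero (M-1)
  have hpi : (0:ℝ) < Real.sqrt Real.pi := Real.sqrt_pos.mpr Real.pi_pos
  constructor
  · have h1 : (∫ x : ℝ, etaTilde M x) = ∫ x : ℝ, etaTilde M x * x ^ (2*0) := by
      simp
    rw [h1, evenFull M 0, etaInt M 0]
    have he : ((0:ℕ):ℝ) - 1 = -(((M-1:ℕ):ℝ) - ((M-1:ℕ):ℝ)) - 1 := by push_cast; ring
    rw [he, momB (M-1) (M-1) le_rfl, Nat.descFactorial_self]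
    field_simp
  · intro k hk1 hk2
    rcases Nat.even_or_odd k with he | ho
    · obtain ⟨j, rfl⟩ := he
      have hj1 : 1 ≤ j := by omega
      have hjn : j ≤ M - 1 := by omega
      rw [show j + j = 2*j from by ring, evenFull M j, etaInt M j,
        momA (M-1) j (M-1) hj1 hjn le_rfl, mul_zero, mul_zero]
    · exact oddZero M k ho
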